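/- Let F be a finite field, let K(F) be the subgroup of GL_3(F) of invertible upper triangular matrices M with M₁₁ = M₂₂ and M₃₃ = 1, and let Z be the subgroup of upper unitriangular matrices with (1,2)- and (2,3)-entries zero. Then Z is normal in K(F) and (K(F), Z) is a Camina pair. -/

import Mathlib

open Matrix

variable (F : Type*) [Field F]

/-- The inverse of an upper unitriangular `3 × 3` matrix, explicitly. -/
lemma unitriangular_inv_val {F : Type*} [Field F] (A : GL (Fin 3) F)
    (hA1 : ∀ i : Fin 3, (A : Matrix (Fin 3) (Fin 3) F) i i = 1)
    (hA0 : ∀ i j : Fin 3, j < i → (A : Matrix (Fin 3) (Fin 3) F) i j = 0) :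
    ((A⁻¹ : GL (Fin 3) F) : Matrix (Fin 3) (Fin 3) F)
      = !![1, -((A : Matrix (Fin 3) (Fin 3) F) 0 1),
            (A : Matrix (Fin 3) (Fin 3) F) 0 1 * (A : Matrix (Fin 3) (Fin 3) F) 1 2
              - (A : Matrix (Fin 3) (Fin 3) F) 0 2;
          0, 1, -((A : Matrix (Fin 3) (Fin 3) F) 1 2); 0, 0, 1] := by
  have a10 := hA0 1 0 (by decide)
  have a20 := hA0 2 0 (by decide)
  have a21 := hA0 2 1 (by decide)
  apply Units.inv_eq_of_mul_eq_one_right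
  ext i j
  fin_cases i <;> fin_cases j <;>
    simp_all [Units.val_mul, Matrix.mul_apply, Fin.sum_univ_three, Matrix.vecHead,
      Matrix.vecTail] <;> ring_nf

/-- The group `H(F)` of upper unitriangular `3 × 3` matrices over `F`. -/
def Unitriangular : Subgroup (GL (Fin 3) F) where
  carrier := {M | (∀ i : Fin 3, (M : Matrix (Fin 3) (Fin 3) F) i i = 1) ∧
      ∀ i j : Fin 3, j < i → (M : Matrix (Fin 3) (Fin 3) F) i j = 0}
  one_mem' := by
    refine ⟨fun i => by simp, fun i j hij => ?_⟩
    simp [Matrix.one_apply, (ne_of_lt hij).symm]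
  mul_mem' := by
    rintro A B ⟨hA1, hA0⟩ ⟨hB1, hB0⟩
    have a10 := hA0 1 0 (by decide)
    have a20 := hA0 2 0 (by decide)
    have a21 := hA0 2 1 (by decide)
    have b10 := hB0 1 0 (by decide)
    have b20 := hB0 2 0 (by decide)
    have b21 := hB0 2 1 (by decide)
    constructor
    · intro i
      fin_cases i <;> simp_all [Units.val_mul, Matrix.mul_apply, Fin.sum_univ_three]
    · intro i j hij
      fin_cases i <;> fin_cases j <;> first
        | exact absurd hij (by decide)
        | simp_all [Units.val_mul, Matrix.mul_apply, Fin.sum_univ_three]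
  inv_mem' := by
    rintro A ⟨hA1, hA0⟩
    have key := unitriangular_inv_val A hA1 hA0
    constructor
    · intro i; fin_cases i <;> simp [key, Matrix.vecHead, Matrix.vecTail]
    · intro i j hij
      fin_cases i <;> fin_cases j <;> first
        | exact absurd hij (by decide)
        | simp [key, Matrix.vecHead, Matrix.vecTail]

/-- The subgroup `Z` of `H(F)`: unitriangular matrices with `(1,2)`- and `(2,3)`-entries zero. -/
def CenterUnitriangular : Subgroup (GL (Fin 3) F) where
  carrier := {M | M ∈ Unitriangular F ∧ (M : Matrix (Fin 3) (Fin 3) F) 0 1 = 0 ∧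
      (M : Matrix (Fin 3) (Fin 3) F) 1 2 = 0}
  one_mem' := ⟨(Unitriangular F).one_mem, by simp [Matrix.one_apply], by simp [Matrix.one_apply]⟩
  mul_mem' := by
    rintro A B ⟨hA, hA01, hA12⟩ ⟨hB, hB01, hB12⟩
    refine ⟨(Unitriangular F).mul_mem hA hB, ?_, ?_⟩ <;>
      simp_all [Units.val_mul, Matrix.mul_apply, Fin.sum_univ_three, hA.1, hB.1,
        hA.2 1 0 (by decide), hA.2 2 0 (by decide), hA.2 2 1 (by decide),
        hB.2 1 0 (by decide), hB.2 2 0 (by decide), hB.2 2 1 (by decide)]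
  inv_mem' := by
    rintro A ⟨hA, hA01, hA12⟩
    have key := unitriangular_inv_val A hA.1 hA.2
    refine ⟨(Unitriangular F).inv_mem hA, ?_, ?_⟩ <;>
      simp [key, hA01, hA12, Matrix.vecHead, Matrix.vecTail]
lemma diag_ne_zero {F : Type*} [Field F] (A : GL (Fin 3) F)
    (h0 : ∀ i j : Fin 3, j < i → (A : Matrix (Fin 3) (Fin 3) F) i j = 0) (i : Fin 3) :
    (A : Matrix (Fin 3) (Fin 3) F) i i ≠ 0 := by
  have hdet : IsUnit (A : Matrix (Fin 3) (Fin 3) F).det :=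
    (Matrix.isUnit_iff_isUnit_det _).mp ⟨A, rfl⟩
  have hd : (A : Matrix (Fin 3) (Fin 3) F).det
      = (A : Matrix (Fin 3) (Fin 3) F) 0 0 * (A : Matrix (Fin 3) (Fin 3) F) 1 1 *
        (A : Matrix (Fin 3) (Fin 3) F) 2 2 := by
    rw [Matrix.det_fin_three]
    simp [h0 1 0 (by decide), h0 2 0 (by decide), h0 2 1 (by decide)]
  rw [hd] at hdet
  have := hdet.ne_zero
  have h00 : (A : Matrix (Fin 3) (Fin 3) F) 0 0 ≠ 0 := fun h => this (by rw [h]; ring)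
  have h11 : (A : Matrix (Fin 3) (Fin 3) F) 1 1 ≠ 0 := fun h => this (by rw [h]; ring)
  have h22 : (A : Matrix (Fin 3) (Fin 3) F) 2 2 ≠ 0 := fun h => this (by rw [h]; ring)
  fin_cases i
  exacts [h00, h11, h22]

lemma kgroup_inv_val {F : Type*} [Field F] (A : GL (Fin 3) F)
    (hA0 : ∀ i j : Fin 3, j < i → (A : Matrix (Fin 3) (Fin 3) F) i j = 0)
    (hA01 : (A : Matrix (Fin 3) (Fin 3) F) 0 0 = (A : Matrix (Fin 3) (Fin 3) F) 1 1)
    (hA1 : (A : Matrix (Fin 3) (Fin 3) F) 2 2 = 1) :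
    ((A⁻¹ : GL (Fin 3) F) : Matrix (Fin 3) (Fin 3) F)
      = !![((A : Matrix (Fin 3) (Fin 3) F) 0 0)⁻¹,
            -((A : Matrix (Fin 3) (Fin 3) F) 0 1 * ((A : Matrix (Fin 3) (Fin 3) F) 0 0)⁻¹ *
              ((A : Matrix (Fin 3) (Fin 3) F) 0 0)⁻¹),
            ((A : Matrix (Fin 3) (Fin 3) F) 0 1 * (A : Matrix (Fin 3) (Fin 3) F) 1 2 *
              ((A : Matrix (Fin 3) (Fin 3) F) 0 0)⁻¹ - (A : Matrix (Fin 3) (Fin 3) F) 0 2) *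
              ((A : Matrix (Fin 3) (Fin 3) F) 0 0)⁻¹;
          0, ((A : Matrix (Fin 3) (Fin 3) F) 0 0)⁻¹,
            -((A : Matrix (Fin 3) (Fin 3) F) 1 2 * ((A : Matrix (Fin 3) (Fin 3) F) 0 0)⁻¹);
          0, 0, 1] := by
  have a10 := hA0 1 0 (by decide); have a20 := hA0 2 0 (by decide)
  have a21 := hA0 2 1 (by decide)
  have hxne : (A : Matrix (Fin 3) (Fin 3) F) 0 0 ≠ 0 := diag_ne_zero A hA0 0
  apply Units.inv_eq_of_mul_eq_one_right
  ext i j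
  fin_cases i <;> fin_cases j <;>
    simp_all [Units.val_mul, Matrix.mul_apply, Fin.sum_univ_three, Matrix.vecHead,
      Matrix.vecTail] <;>
    field_simp <;> ring_nf

/-- The group `K(F)`: invertible upper triangular `3 × 3` matrices over `F` whose
first two diagonal entries are equal and whose `(3,3)`-entry is `1`. -/
def KGroup : Subgroup (GL (Fin 3) F) where
  carrier := {M | (∀ i j : Fin 3, j < i → (M : Matrix (Fin 3) (Fin 3) F) i j = 0) ∧
      (M : Matrix (Fin 3) (Fin 3) F) 0 0 = (M : Matrix (Fin 3) (Fin 3) F) 1 1 ∧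
      (M : Matrix (Fin 3) (Fin 3) F) 2 2 = 1}
  one_mem' := by
    refine ⟨fun i j hij => ?_, by simp, by simp⟩
    simp [Matrix.one_apply, (ne_of_lt hij).symm]
  mul_mem' := by
    rintro A B ⟨hA0, hA01, hA1⟩ ⟨hB0, hB01, hB1⟩
    have a10 := hA0 1 0 (by decide); have a20 := hA0 2 0 (by decide)
    have a21 := hA0 2 1 (by decide)
    have b10 := hB0 1 0 (by decide); have b20 := hB0 2 0 (by decide)
    have b21 := hB0 2 1 (by decide)
    refine ⟨fun i j hij => ?_, ?_, ?_⟩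
    · fin_cases i <;> fin_cases j <;> first
        | exact absurd hij (by decide)
        | simp_all [Units.val_mul, Matrix.mul_apply, Fin.sum_univ_three]
    · simp_all [Units.val_mul, Matrix.mul_apply, Fin.sum_univ_three]
    · simp_all [Units.val_mul, Matrix.mul_apply, Fin.sum_univ_three]
  inv_mem' := by
    rintro A ⟨hA0, hA01, hA1⟩
    have key := kgroup_inv_val A hA0 hA01 hA1
    refine ⟨fun i j hij => ?_, ?_, ?_⟩
    · fin_cases i <;> fin_cases j <;> first
        | exact absurd hij (by decide)
        | simp [key, Matrix.vecHead, Matrix.vecTail]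
    · simp [key, Matrix.vecHead, Matrix.vecTail]
    · simp [key, Matrix.vecHead, Matrix.vecTail]


/-- `(G, N)` is a Camina pair: `N` is normal in `G` and every element `g ∈ G \\ N`
is conjugate in `G` to every element of the coset `g N`. -/
def IsCaminaPair (G : Type*) [Group G] (N : Subgroup G) : Prop :=
  N.Normal ∧ ∀ g : G, g ∉ N → ∀ n ∈ N, IsConj g (g * n)

/-- Explicit unitriangular element of `GL (Fin 3) F`. -/
def uniGL {F : Type*} [Field F] (y v w : F) : GL (Fin 3) F where
  val := !![1, y, w; 0, 1, v; 0, 0, 1]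
  inv := !![1, -y, y * v - w; 0, 1, -v; 0, 0, 1]
  val_inv := by
    ext i j
    fin_cases i <;> fin_cases j <;>
      simp [Matrix.mul_apply, Fin.sum_univ_three, Matrix.one_apply, Matrix.vecHead,
        Matrix.vecTail] <;> ring
  inv_val := by
    ext i j
    fin_cases i <;> fin_cases j <;>
      simp [Matrix.mul_apply, Fin.sum_univ_three, Matrix.one_apply, Matrix.vecHead,
        Matrix.vecTail] <;> ring

lemma uniGL_mem_K {F : Type*} [Field F] (y v w : F) : uniGL y v w ∈ KGroup F := by
  refine ⟨fun i j hij => ?_, ?_, ?_⟩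
  · fin_cases i <;> fin_cases j <;> first
      | exact absurd hij (by decide)
      | simp [uniGL, Matrix.vecHead, Matrix.vecTail]
  · simp [uniGL, Matrix.vecHead, Matrix.vecTail]
  · simp [uniGL, Matrix.vecHead, Matrix.vecTail]

lemma uniGL_mem_Z {F : Type*} [Field F] (w : F) : uniGL 0 0 w ∈ CenterUnitriangular F := by
  refine ⟨⟨fun i => ?_, fun i j hij => ?_⟩, ?_, ?_⟩
  · fin_cases i <;> simp [uniGL, Matrix.vecHead, Matrix.vecTail]
  · fin_cases i <;> fin_cases j <;> first
      | exact absurd hij (by decide)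
      | simp [uniGL, Matrix.vecHead, Matrix.vecTail]
  · simp [uniGL, Matrix.vecHead, Matrix.vecTail]
  · simp [uniGL, Matrix.vecHead, Matrix.vecTail]

lemma mem_Z_iff_of_mem_K {F : Type*} [Field F] (g : GL (Fin 3) F) (hg : g ∈ KGroup F) :
    g ∈ CenterUnitriangular F ↔ ((g : Matrix (Fin 3) (Fin 3) F) 0 0 = 1 ∧
      (g : Matrix (Fin 3) (Fin 3) F) 0 1 = 0 ∧ (g : Matrix (Fin 3) (Fin 3) F) 1 2 = 0) := by
  obtain ⟨h0, h01, h1⟩ := hg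
  constructor
  · rintro ⟨⟨hd, -⟩, hb, hdd⟩
    exact ⟨hd 0, hb, hdd⟩
  · rintro ⟨ha, hb, hd⟩
    refine ⟨⟨fun i => ?_, h0⟩, hb, hd⟩
    fin_cases i
    · exact ha
    · exact h01.symm.trans ha
    · exact h1

/-- Key semiconjugation identity. -/
lemma semiconj_aux {F : Type*} [Field F] (g n : GL (Fin 3) F)
    (hg : g ∈ KGroup F) (hn : n ∈ CenterUnitriangular F) (y v w : F)
    (hv : v * (1 - (g : Matrix (Fin 3) (Fin 3) F) 0 0) = 0)
    (hkey : y * (g : Matrix (Fin 3) (Fin 3) F) 1 2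
        + w * (1 - (g : Matrix (Fin 3) (Fin 3) F) 0 0)
        - (g : Matrix (Fin 3) (Fin 3) F) 0 1 * v
      = (g : Matrix (Fin 3) (Fin 3) F) 0 0 * (n : Matrix (Fin 3) (Fin 3) F) 0 2) :
    uniGL y v w * g = (g * n) * uniGL y v w := by
  obtain ⟨hg0, hg01, hg1⟩ := hg
  obtain ⟨⟨hn1, hn0⟩, hn01, hn12⟩ := hn
  have g10 := hg0 1 0 (by decide); have g20 := hg0 2 0 (by decide)
  have g21 := hg0 2 1 (by decide)
  have n10 := hn0 1 0 (by decide); have n20 := hn0 2 0 (by decide)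
  have n21 := hn0 2 1 (by decide)
  have n00 := hn1 0; have n11 := hn1 1; have n22 := hn1 2
  ext i j
  fin_cases i <;> fin_cases j <;>
    simp [uniGL, Units.val_mul, Matrix.mul_apply, Fin.sum_univ_three, Matrix.vecHead,
      Matrix.vecTail, g10, g20, g21, n10, n20, n21, n00, n11, n22, hn01, hn12, hg1] <;>
    first
      | ring1
      | linear_combination hkey
      | linear_combination (-y) * hg01
      | linear_combination hv + v * hg01


lemma conj_mem_Z {F : Type*} [Field F] (g n : GL (Fin 3) F)
    (hg : g ∈ KGroup F) (hn : n ∈ CenterUnitriangular F) :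
    g * n * g⁻¹ ∈ CenterUnitriangular F := by
  have hg' := hg; have hn' := hn
  obtain ⟨hg0, hg01, hg1⟩ := hg'
  obtain ⟨⟨hn1, hn0⟩, hn01, hn12⟩ := hn'
  have g10 := hg0 1 0 (by decide); have g20 := hg0 2 0 (by decide)
  have g21 := hg0 2 1 (by decide)
  have nn10 := hn0 1 0 (by decide); have nn20 := hn0 2 0 (by decide)
  have nn21 := hn0 2 1 (by decide)
  have n00 := hn1 0; have n11 := hn1 1; have n22 := hn1 2
  set m := uniGL (0 : F) 0
      ((g : Matrix (Fin 3) (Fin 3) F) 0 0 * (n : Matrix (Fin 3) (Fin 3) F) 0 2) with hm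
  have hmg : m * g = g * n := by
    ext i j
    fin_cases i <;> fin_cases j <;>
      simp [hm, uniGL, Units.val_mul, Matrix.mul_apply, Fin.sum_univ_three,
        Matrix.vecHead, Matrix.vecTail,
        g10, g20, g21, nn10, nn20, nn21, n00, n11, n22, hn01, hn12, hg1] <;>
      first | ring1 | linear_combination (n : Matrix (Fin 3) (Fin 3) F) 0 2 * hg01
  have : g * n * g⁻¹ = m := by rw [← hmg]; group
  rw [this]
  exact uniGL_mem_Z _

/-- For a finite field `F`, `Z ≤ K(F)` is normal and `(K(F), Z)` is a Camina pair. -/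
theorem kgroup_caminaPair [Fintype F] :
    CenterUnitriangular F ≤ KGroup F ∧
      IsCaminaPair ↥(KGroup F) ((CenterUnitriangular F).subgroupOf (KGroup F)) := by
  refine ⟨?_, ?_, ?_⟩
  · rintro g ⟨⟨hd, h0⟩, hb, hdd⟩
    exact ⟨h0, by rw [hd 0, hd 1], hd 2⟩
  · constructor
    intro n hn g
    rw [Subgroup.mem_subgroupOf] at hn ⊢
    have hco : ((g * n * g⁻¹ : ↥(KGroup F)) : GL (Fin 3) F)
        = (g : GL (Fin 3) F) * (n : GL (Fin 3) F) * (g : GL (Fin 3) F)⁻¹ := rfl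
    rw [hco]
    exact conj_mem_Z _ _ g.2 hn
  · intro g hg n hn
    rw [Subgroup.mem_subgroupOf] at hn
    have hg' : (g : GL (Fin 3) F) ∉ CenterUnitriangular F :=
      fun h => hg (Subgroup.mem_subgroupOf.mpr h)
    rw [mem_Z_iff_of_mem_K _ g.2] at hg'
    push_neg at hg'
    set a := ((g : GL (Fin 3) F) : Matrix (Fin 3) (Fin 3) F) 0 0 with ha'
    set b := ((g : GL (Fin 3) F) : Matrix (Fin 3) (Fin 3) F) 0 1 with hb'
    set d := ((g : GL (Fin 3) F) : Matrix (Fin 3) (Fin 3) F) 1 2 with hd'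
    set z := ((n : GL (Fin 3) F) : Matrix (Fin 3) (Fin 3) F) 0 2 with hz'
    have key : ∀ y v w : F, v * (1 - a) = 0 → y * d + w * (1 - a) - b * v = a * z →
        IsConj g (g * n) := by
      intro y v w hv hkey
      rw [isConj_iff]
      refine ⟨⟨uniGL y v w, uniGL_mem_K y v w⟩, ?_⟩
      have hsc : (⟨uniGL y v w, uniGL_mem_K y v w⟩ : ↥(KGroup F)) * g
          = (g * n) * ⟨uniGL y v w, uniGL_mem_K y v w⟩ := by
        apply Subtype.ext
        simpa using semiconj_aux (g : GL (Fin 3) F) (n : GL (Fin 3) F) g.2 hn y v w hv hkey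
      rw [hsc, mul_inv_cancel_right]
    by_cases hA : a = 1
    · by_cases hB : b = 0
      · have hD : d ≠ 0 := hg' hA hB
        exact key (z / d) 0 0 (by ring) (by rw [hA]; field_simp [hD]; ring)
      · exact key 0 (-(z / b)) 0 (by rw [hA]; ring) (by rw [hA]; field_simp [hB]; ring)
    · have h1a : (1 : F) - a ≠ 0 := sub_ne_zero.mpr fun h => hA h.symm
      exact key 0 0 (a * z / (1 - a)) (by ring) (by field_simp [h1a]; ring)
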